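/- Let f be real-analytic near its simple root α. Define the iteration map F(x) = x - [2 - (7/4)·t(x) + (3/4)·t(x)²]·2 f(x)/(f'(x) + f'(y(x))), where y(x) = x - (2/3)·f(x)/f'(x) and t(x) = f'(y(x))/f'(x), for x near α (so that f'(x) ≠ 0 and f'(x) + f'(y(x)) ≠ 0). Then this two-step method, which uses only three function evaluations per iteration, is of (optimal) fourth order, and as x → α, F(x) - α = (1/9)·[-9 c₂ c₃ + c₄ + 33 c₂³]·(x - α)⁴ + O((x - α)⁵). -/

import Mathlib

open Filter Asymptotics
set_option maxHeartbeats 4000000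

def J (h : ℝ → ℝ) (p0 p1 p2 p3 p4 : ℝ) : Prop :=
  (fun e => h e - (p0 + p1*e + p2*e^2 + p3*e^3 + p4*e^4)) =O[nhds (0:ℝ)] (fun e => e^5)

lemma isBigO_e5_mul {S : ℝ → ℝ} (hS : Continuous S) :
    (fun e : ℝ => e^5 * S e) =O[nhds (0:ℝ)] fun e => e^5 := by
  have := (isBigO_refl (fun e : ℝ => e^5) (nhds 0)).mul ((hS.tendsto 0).isBigO_one ℝ)
  exact this.congr (fun _ => rfl) (fun e => mul_one _)

lemma poly_tendsto (p0 p1 p2 p3 p4 : ℝ) :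
    Tendsto (fun e : ℝ => p0 + p1*e + p2*e^2 + p3*e^3 + p4*e^4) (nhds 0) (nhds p0) := by
  have : Continuous (fun e : ℝ => p0 + p1*e + p2*e^2 + p3*e^3 + p4*e^4) := by fun_prop
  simpa using this.tendsto 0

lemma J.tendsto {g : ℝ → ℝ} {q0 q1 q2 q3 q4 : ℝ} (hg : J g q0 q1 q2 q3 q4) :
    Tendsto g (nhds 0) (nhds q0) := by
  have h1 : Tendsto (fun e : ℝ => g e - (q0 + q1*e + q2*e^2 + q3*e^3 + q4*e^4))
      (nhds 0) (nhds 0) := hg.trans_tendsto (by simpa using (continuous_pow 5).tendsto (0:ℝ))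
  have := h1.add (poly_tendsto q0 q1 q2 q3 q4)
  simpa using this

lemma J.isBigO_one {g : ℝ → ℝ} {q0 q1 q2 q3 q4 : ℝ} (hg : J g q0 q1 q2 q3 q4) :
    g =O[nhds (0:ℝ)] (fun _ => (1:ℝ)) := hg.tendsto.isBigO_one ℝ

lemma J.congr {h : ℝ → ℝ} {p0 p1 p2 p3 p4 q0 q1 q2 q3 q4 : ℝ} (hh : J h p0 p1 p2 p3 p4)
    (e0 : q0 = p0) (e1 : q1 = p1) (e2 : q2 = p2) (e3 : q3 = p3) (e4 : q4 = p4) :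
    J h q0 q1 q2 q3 q4 := by subst e0 e1 e2 e3 e4; exact hh

lemma J.congr_fun {h g : ℝ → ℝ} {p0 p1 p2 p3 p4 : ℝ} (hh : J h p0 p1 p2 p3 p4)
    (hg : ∀ e, g e = h e) : J g p0 p1 p2 p3 p4 := by
  unfold J at *
  exact hh.congr (fun e => by rw [hg e]) (fun _ => rfl)

lemma J.id : J (fun e => e) 0 1 0 0 0 := by
  unfold J
  refine (isBigO_zero _ _).congr' (Filter.Eventually.of_forall fun e => by ring) (by rfl)

lemma J.const (c : ℝ) : J (fun _ => c) c 0 0 0 0 := by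
  unfold J
  refine (isBigO_zero _ _).congr' (Filter.Eventually.of_forall fun e => by ring) (by rfl)

lemma J.add {h g : ℝ → ℝ} {p0 p1 p2 p3 p4 q0 q1 q2 q3 q4 : ℝ}
    (hh : J h p0 p1 p2 p3 p4) (hg : J g q0 q1 q2 q3 q4) :
    J (fun e => h e + g e) (p0+q0) (p1+q1) (p2+q2) (p3+q3) (p4+q4) := by
  unfold J at *
  exact (hh.add hg).congr' (Filter.Eventually.of_forall fun e => by ring) (by rfl)

lemma J.sub {h g : ℝ → ℝ} {p0 p1 p2 p3 p4 q0 q1 q2 q3 q4 : ℝ}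
    (hh : J h p0 p1 p2 p3 p4) (hg : J g q0 q1 q2 q3 q4) :
    J (fun e => h e - g e) (p0-q0) (p1-q1) (p2-q2) (p3-q3) (p4-q4) := by
  unfold J at *
  exact (hh.sub hg).congr' (Filter.Eventually.of_forall fun e => by ring) (by rfl)

lemma J.smul (c : ℝ) {h : ℝ → ℝ} {p0 p1 p2 p3 p4 : ℝ} (hh : J h p0 p1 p2 p3 p4) :
    J (fun e => c * h e) (c*p0) (c*p1) (c*p2) (c*p3) (c*p4) := by
  unfold J at *
  exact (hh.const_mul_left c).congr' (Filter.Eventually.of_forall fun e => by ring) (by rfl)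

lemma J.mul {h g : ℝ → ℝ} {p0 p1 p2 p3 p4 q0 q1 q2 q3 q4 : ℝ}
    (hh : J h p0 p1 p2 p3 p4) (hg : J g q0 q1 q2 q3 q4) :
    J (fun e => h e * g e) (p0*q0) (p0*q1+p1*q0) (p0*q2+p1*q1+p2*q0)
      (p0*q3+p1*q2+p2*q1+p3*q0) (p0*q4+p1*q3+p2*q2+p3*q1+p4*q0) := by
  have hgb := hg.isBigO_one
  have hPb : (fun e : ℝ => p0 + p1*e + p2*e^2 + p3*e^3 + p4*e^4) =O[nhds (0:ℝ)]
      (fun _ => (1:ℝ)) := (poly_tendsto p0 p1 p2 p3 p4).isBigO_one ℝ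
  unfold J at *
  have t1 := (hh.mul hgb).congr (fun _ => rfl) (fun e : ℝ => mul_one (e^5))
  have t2 := (hPb.mul hg).congr (fun _ => rfl) (fun e : ℝ => one_mul (e^5))
  have t3 : (fun e : ℝ => e^5 * ((p1*q4+p2*q3+p3*q2+p4*q1) + (p2*q4+p3*q3+p4*q2)*e
      + (p3*q4+p4*q3)*e^2 + (p4*q4)*e^3)) =O[nhds (0:ℝ)] fun e => e^5 :=
    isBigO_e5_mul (by continuity)
  have := (t1.add t2).add t3
  exact this.congr' (Filter.Eventually.of_forall fun e => by ring) (by rfl)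

lemma J.inv {g : ℝ → ℝ} {q0 q1 q2 q3 q4 r0 r1 r2 r3 r4 : ℝ}
    (hg : J g q0 q1 q2 q3 q4) (hq0 : q0 ≠ 0)
    (e0 : q0*r0 = 1) (e1 : q0*r1 + q1*r0 = 0) (e2 : q0*r2+q1*r1+q2*r0 = 0)
    (e3 : q0*r3+q1*r2+q2*r1+q3*r0 = 0) (e4 : q0*r4+q1*r3+q2*r2+q3*r1+q4*r0 = 0) :
    J (fun e => (g e)⁻¹) r0 r1 r2 r3 r4 := by
  have hgt := hg.tendsto
  have hne : ∀ᶠ e in nhds (0:ℝ), g e ≠ 0 := hgt.eventually_ne hq0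
  have hginv : (fun e => (g e)⁻¹) =O[nhds (0:ℝ)] (fun _ => (1:ℝ)) :=
    (hgt.inv₀ hq0).isBigO_one ℝ
  have hRb : (fun e : ℝ => r0 + r1*e + r2*e^2 + r3*e^3 + r4*e^4) =O[nhds (0:ℝ)]
      (fun _ => (1:ℝ)) := (poly_tendsto r0 r1 r2 r3 r4).isBigO_one ℝ
  unfold J at *
  have key : ∀ e : ℝ, 1 - (r0 + r1*e + r2*e^2 + r3*e^3 + r4*e^4)
      * (q0 + q1*e + q2*e^2 + q3*e^3 + q4*e^4)
      = e^5 * (-(r1*q4+r2*q3+r3*q2+r4*q1) - (r2*q4+r3*q3+r4*q2)*e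
        - (r3*q4+r4*q3)*e^2 - (r4*q4)*e^3) := by
    intro e
    linear_combination (-1:ℝ)*e0 - e*e1 - e^2*e2 - e^3*e3 - e^4*e4
  have m1 : (fun e : ℝ => 1 - (r0 + r1*e + r2*e^2 + r3*e^3 + r4*e^4)
      * (q0 + q1*e + q2*e^2 + q3*e^3 + q4*e^4)) =O[nhds (0:ℝ)] fun e => e^5 := by
    refine (isBigO_e5_mul (S := fun e => -(r1*q4+r2*q3+r3*q2+r4*q1) - (r2*q4+r3*q3+r4*q2)*e
        - (r3*q4+r4*q3)*e^2 - (r4*q4)*e^3) (by continuity)).congr'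
      (Filter.Eventually.of_forall fun e => (key e).symm) (by rfl)
  have m2 := (hRb.mul hg).congr (fun _ => rfl) (fun e : ℝ => one_mul (e^5))
  have main := ((m1.sub m2).mul hginv).congr (fun _ => rfl) (fun e : ℝ => mul_one (e^5))
  refine main.congr' ?_ (by rfl)
  filter_upwards [hne] with e he
  field_simp
  ring
lemma J.comp {D w : ℝ → ℝ} {d0 d1 d2 d3 d4 q1 q2 q3 q4 : ℝ}
    (hD : J D d0 d1 d2 d3 d4) (hw : J w 0 q1 q2 q3 q4) :
    J (fun e => D (w e)) d0 (d1*q1) (d1*q2 + d2*q1^2) (d1*q3 + 2*d2*q1*q2 + d3*q1^3)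
      (d1*q4 + d2*(2*q1*q3 + q2^2) + 3*d3*q1^2*q2 + d4*q1^4) := by
  have hw0 : Tendsto w (nhds 0) (nhds 0) := by simpa using hw.tendsto
  have hWt : Tendsto (fun e : ℝ => q1*e + q2*e^2 + q3*e^3 + q4*e^4) (nhds 0) (nhds 0) := by
    simpa using poly_tendsto 0 q1 q2 q3 q4
  have hwW : (fun e => w e - (q1*e + q2*e^2 + q3*e^3 + q4*e^4)) =O[nhds (0:ℝ)]
      (fun e => e^5) := by
    unfold J at hw
    exact hw.congr (fun e => by ring) (fun _ => rfl)
  have he5e : (fun e : ℝ => e^5) =O[nhds (0:ℝ)] (fun e => e) := by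
    have := (isBigO_refl (fun e : ℝ => e) (nhds 0)).mul
      (((continuous_pow 4).tendsto (0:ℝ)).isBigO_one ℝ)
    exact this.congr (fun e => by ring) (fun e => mul_one e)
  have hWO : (fun e : ℝ => q1*e + q2*e^2 + q3*e^3 + q4*e^4) =O[nhds (0:ℝ)] (fun e => e) := by
    have := (isBigO_refl (fun e : ℝ => e) (nhds 0)).mul
      ((poly_tendsto q1 q2 q3 q4 0).isBigO_one ℝ)
    exact this.congr (fun e => by ring) (fun e => mul_one e)
  have hwO : w =O[nhds (0:ℝ)] (fun e => e) := by
    have := (hwW.trans he5e).add hWO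
    exact this.congr (fun e => by ring) (fun _ => rfl)
  unfold J at hD ⊢
  have step1 : (fun e => D (w e) - (d0 + d1*(w e) + d2*(w e)^2 + d3*(w e)^3 + d4*(w e)^4))
      =O[nhds (0:ℝ)] (fun e => e^5) := by
    have h1 := hD.comp_tendsto hw0
    exact h1.trans (hwO.pow 5)
  set W : ℝ → ℝ := fun e => q1*e + q2*e^2 + q3*e^3 + q4*e^4 with hWdef
  have hC : Tendsto (fun e => d1 + d2*(w e + W e) + d3*((w e)^2 + w e * W e + (W e)^2)
      + d4*((w e)^3 + (w e)^2*(W e) + (w e)*(W e)^2 + (W e)^3)) (nhds 0) (nhds d1) := by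
    have hp : Tendsto (fun e : ℝ => (w e, W e)) (nhds 0) (nhds ((0:ℝ), (0:ℝ))) :=
      hw0.prodMk_nhds hWt
    have hcont : Continuous (fun p : ℝ × ℝ => d1 + d2*(p.1 + p.2) + d3*(p.1^2 + p.1*p.2 + p.2^2)
        + d4*(p.1^3 + p.1^2*p.2 + p.1*p.2^2 + p.2^3)) := by fun_prop
    have := (hcont.tendsto ((0:ℝ),(0:ℝ))).comp hp
    simpa [Function.comp_def] using this
  have step2 : (fun e => (d0 + d1*(w e) + d2*(w e)^2 + d3*(w e)^3 + d4*(w e)^4)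
      - (d0 + d1*(W e) + d2*(W e)^2 + d3*(W e)^3 + d4*(W e)^4)) =O[nhds (0:ℝ)]
      (fun e => e^5) := by
    have := hwW.mul (hC.isBigO_one ℝ)
    exact this.congr (fun e => by ring) (fun e => mul_one _)
  have step3 : (fun e => (d0 + d1*(W e) + d2*(W e)^2 + d3*(W e)^3 + d4*(W e)^4)
      - (d0 + (d1*q1)*e + (d1*q2 + d2*q1^2)*e^2 + (d1*q3 + 2*d2*q1*q2 + d3*q1^3)*e^3
        + (d1*q4 + d2*(2*q1*q3 + q2^2) + 3*d3*q1^2*q2 + d4*q1^4)*e^4)) =O[nhds (0:ℝ)]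
      (fun e => e^5) := by
    have hSc : Continuous (fun e : ℝ => (4*d4*q1^3*q2 + 3*d3*q1*q2^2 + 3*d3*q1^2*q3 + 2*d2*q2*q3 + 2*d2*q1*q4)*e^0 + (6*d4*q1^2*q2^2 + 4*d4*q1^3*q3 + d3*q2^3 + 6*d3*q1*q2*q3 + 3*d3*q1^2*q4 + d2*q3^2 + 2*d2*q2*q4)*e^1 + (4*d4*q1*q2^3 + 12*d4*q1^2*q2*q3 + 4*d4*q1^3*q4 + 3*d3*q2^2*q3 + 3*d3*q1*q3^2 + 6*d3*q1*q2*q4 + 2*d2*q3*q4)*e^2 + (d4*q2^4 + 12*d4*q1*q2^2*q3 + 6*d4*q1^2*q3^2 + 12*d4*q1^2*q2*q4 + 3*d3*q2*q3^2 + 3*d3*q2^2*q4 + 6*d3*q1*q3*q4 + d2*q4^2)*e^3 + (4*d4*q2^3*q3 + 12*d4*q1*q2*q3^2 + 12*d4*q1*q2^2*q4 + 12*d4*q1^2*q3*q4 + d3*q3^3 + 6*d3*q2*q3*q4 + 3*d3*q1*q4^2)*e^4 + (6*d4*q2^2*q3^2 + 4*d4*q2^3*q4 + 4*d4*q1*q3^3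 + 24*d4*q1*q2*q3*q4 + 6*d4*q1^2*q4^2 + 3*d3*q3^2*q4 + 3*d3*q2*q4^2)*e^5 + (4*d4*q2*q3^3 + 12*d4*q2^2*q3*q4 + 12*d4*q1*q3^2*q4 + 12*d4*q1*q2*q4^2 + 3*d3*q3*q4^2)*e^6 + (d4*q3^4 + 12*d4*q2*q3^2*q4 + 6*d4*q2^2*q4^2 + 12*d4*q1*q3*q4^2 + d3*q4^3)*e^7 + (4*d4*q3^3*q4 + 12*d4*q2*q3*q4^2 + 4*d4*q1*q4^3)*e^8 + (6*d4*q3^2*q4^2 + 4*d4*q2*q4^3)*e^9 + (4*d4*q3*q4^3)*e^10 + (d4*q4^4)*e^11) := by fun_prop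
    refine (isBigO_e5_mul hSc).congr (fun e => ?_) (fun _ => rfl)
    simp only [hWdef]
    ring
  have := (step1.add step2).add step3
  exact this.congr (fun e => by ring) (fun _ => rfl)

lemma jet_of_analytic {h : ℝ → ℝ} {α : ℝ} (hh : AnalyticAt ℝ h α) :
    J (fun e => h (α + e)) (h α) (deriv h α) (iteratedDeriv 2 h α / 2)
      (iteratedDeriv 3 h α / 6) (iteratedDeriv 4 h α / 24) := by
  obtain ⟨p, hp⟩ := hh
  have hcoeff : ∀ n, p.coeff n = iteratedDeriv n h α / (n.factorial : ℝ) := by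
    intro n
    obtain ⟨r, hr⟩ := hp
    have h1 := hr.factorial_smul (1 : ℝ) n
    rw [iteratedDeriv_eq_iteratedFDeriv, ← h1]
    have hne : (n.factorial : ℝ) ≠ 0 := Nat.cast_ne_zero.2 n.factorial_ne_zero
    rw [nsmul_eq_mul, mul_div_cancel_left₀ _ hne]
    rfl
  have hO := hp.isBigO_sub_partialSum_pow 5
  have hps : ∀ y : ℝ, p.partialSum 5 y =
      h α + deriv h α * y + iteratedDeriv 2 h α / 2 * y^2
        + iteratedDeriv 3 h α / 6 * y^3 + iteratedDeriv 4 h α / 24 * y^4 := by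
    intro y
    simp [FormalMultilinearSeries.partialSum, Finset.sum_range_succ,
      p.apply_eq_pow_smul_coeff, hcoeff, iteratedDeriv_zero, iteratedDeriv_one]
    norm_num [Nat.factorial]
    ring
  unfold J
  have : (fun y : ℝ => ‖y‖^5) =O[nhds (0:ℝ)] (fun y => y^5) := by
    apply IsBigO.of_bound 1
    filter_upwards with y
    simp [abs_pow]
  refine ((hO.congr' ?_ (by rfl)).trans this)
  filter_upwards with y
  rw [hps]

lemma analyticAt_deriv {f : ℝ → ℝ} {α : ℝ} (hf : AnalyticAt ℝ f α) :
    AnalyticAt ℝ (deriv f) α := by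
  obtain ⟨p, r, hp⟩ := hf
  exact hp.analyticOnNhd.deriv α (EMetric.mem_ball_self hp.r_pos)

/-- The two-step method
`F(x) = x - [2 - (7/4)t + (3/4)t²]·2f(x)/(f'(x) + f'(y(x)))` with
`y(x) = x - (2/3)f(x)/f'(x)` and `t(x) = f'(y(x))/f'(x)` is of fourth order:
`F(x) - α = (1/9)·[-9c₂c₃ + c₄ + 33c₂³]·(x - α)⁴ + O((x - α)⁵)` as `x → α`. -/
theorem fourth_order_method_1
    (f : ℝ → ℝ) (α : ℝ)
    (hf : AnalyticAt ℝ f α) (hroot : f α = 0) (hder : deriv f α ≠ 0) :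
    let c₂ := iteratedDeriv 2 f α / ((Nat.factorial 2 : ℝ) * deriv f α)
    let c₃ := iteratedDeriv 3 f α / ((Nat.factorial 3 : ℝ) * deriv f α)
    let c₄ := iteratedDeriv 4 f α / ((Nat.factorial 4 : ℝ) * deriv f α)
    let y : ℝ → ℝ := fun x => x - (2/3) * (f x / deriv f x)
    let t : ℝ → ℝ := fun x => deriv f (y x) / deriv f x
    let F : ℝ → ℝ := fun x =>
      x - (2 - (7/4) * t x + (3/4) * (t x)^2) *
            (2 * f x / (deriv f x + deriv f (y x)))
    (fun x => F x - α - (1/9) * (-9 * c₂ * c₃ + c₄ + 33 * c₂^3) * (x - α)^4)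
      =O[nhds α] (fun x => (x - α)^5) := by
  intro c₂ c₃ c₄ y t F
  have hc2 : c₂ = iteratedDeriv 2 f α / ((Nat.factorial 2 : ℝ) * deriv f α) := rfl
  have hc3 : c₃ = iteratedDeriv 3 f α / ((Nat.factorial 3 : ℝ) * deriv f α) := rfl
  have hc4 : c₄ = iteratedDeriv 4 f α / ((Nat.factorial 4 : ℝ) * deriv f α) := rfl
  norm_num [Nat.factorial] at hc2 hc3 hc4
  have hy : ∀ x, y x = x - (2/3) * (f x / deriv f x) := fun _ => rfl
  have ht : ∀ x, t x = deriv f (y x) / deriv f x := fun _ => rfl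
  have hF : ∀ x, F x = x - (2 - (7/4) * t x + (3/4) * (t x)^2) *
      (2 * f x / (deriv f x + deriv f (y x))) := fun _ => rfl
  have E2 : deriv (deriv f) α = iteratedDeriv 2 f α := by
    conv_rhs => rw [show (2:ℕ) = 1 + 1 from rfl, iteratedDeriv_succ', iteratedDeriv_one]
  have E3 : iteratedDeriv 2 (deriv f) α = iteratedDeriv 3 f α := by
    conv_rhs => rw [show (3:ℕ) = 2 + 1 from rfl, iteratedDeriv_succ']
  have E4 : iteratedDeriv 3 (deriv f) α = iteratedDeriv 4 f α := by
    conv_rhs => rw [show (4:ℕ) = 3 + 1 from rfl, iteratedDeriv_succ']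
  have hFe : J (fun e => f (α + e)) (0) (deriv f α) ((deriv f α)*c₂) ((deriv f α)*c₃) ((deriv f α)*c₄) := by
    refine (jet_of_analytic hf).congr ?_ ?_ ?_ ?_ ?_
    · rw [hroot]
    · rfl
    · rw [hc2]; field_simp; try ring
    · rw [hc3]; field_simp
    · rw [hc4]; field_simp
  have hDe : J (fun e => deriv f (α + e)) (deriv f α) (2*(deriv f α)*c₂) (3*(deriv f α)*c₃) (4*(deriv f α)*c₄) (iteratedDeriv 4 (deriv f) α / 24) := by
    refine (jet_of_analytic (analyticAt_deriv hf)).congr ?_ ?_ ?_ ?_ ?_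
    · rfl
    · rw [E2, hc2]; field_simp; try ring
    · rw [E3, hc3]; field_simp; ring
    · rw [E4, hc4]; field_simp; ring
    · rfl
  have hDI : J (fun e => (deriv f (α + e))⁻¹) ((1)/(deriv f α)) ((-2)*c₂/(deriv f α)) ((-3)*c₃/(deriv f α) + (4)*c₂^2/(deriv f α)) ((-4)*c₄/(deriv f α) + (12)*c₂*c₃/(deriv f α) + (-8)*c₂^3/(deriv f α)) ((-1)*(iteratedDeriv 4 (deriv f) α / 24)/(deriv f α)^2 + (9)*c₃^2/(deriv f α) + (16)*c₂*c₄/(deriv f α) + (-36)*c₂^2*c₃/(deriv f α) + (16)*c₂^4/(deriv f α)) := by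
    refine J.inv hDe hder ?_ ?_ ?_ ?_ ?_ <;> (field_simp; try ring)
  have hU : J (fun e => f (α + e) * (deriv f (α + e))⁻¹) 0 ((1)) ((-1)*c₂) ((-2)*c₃ + (2)*c₂^2) ((-3)*c₄ + (7)*c₂*c₃ + (-4)*c₂^3) := by
    refine (hFe.mul hDI).congr ?_ ?_ ?_ ?_ ?_ <;> (field_simp; try ring)
  have hYE : J (fun e => e - (2/3) * (f (α + e) * (deriv f (α + e))⁻¹)) 0 ((1/3)) ((2/3)*c₂) ((4/3)*c₃ + (-4/3)*c₂^2) ((2)*c₄ + (-14/3)*c₂*c₃ + (8/3)*c₂^3) := by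
    refine (J.id.sub (J.smul (2/3) hU)).congr ?_ ?_ ?_ ?_ ?_ <;> (field_simp; try ring)
  have hDY : J (fun e => deriv f (α + (e - (2/3) * (f (α + e) * (deriv f (α + e))⁻¹)))) ((1)*(deriv f α)) ((2/3)*c₂*(deriv f α)) ((1/3)*c₃*(deriv f α) + (4/3)*c₂^2*(deriv f α)) ((4/27)*c₄*(deriv f α) + (4)*c₂*c₃*(deriv f α) + (-8/3)*c₂^3*(deriv f α)) ((1/81)*(iteratedDeriv 4 (deriv f) α / 24) + (8/3)*c₃^2*(deriv f α) + (44/9)*c₂*c₄*(deriv f α) + (-32/3)*c₂^2*c₃*(deriv f α) + (16/3)*c₂^4*(deriv f α)) := by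
    refine (J.comp hDe hYE).congr ?_ ?_ ?_ ?_ ?_ <;> (field_simp; try ring)
  have hT : J (fun e => deriv f (α + (e - (2/3) * (f (α + e) * (deriv f (α + e))⁻¹))) * (deriv f (α + e))⁻¹) ((1)) ((-4/3)*c₂) ((-8/3)*c₃ + (4)*c₂^2) ((-104/27)*c₄ + (40/3)*c₂*c₃ + (-32/3)*c₂^3) ((-80/81)*(iteratedDeriv 4 (deriv f) α / 24)/(deriv f α) + (32/3)*c₃^2 + (484/27)*c₂*c₄ + (-148/3)*c₂^2*c₃ + (80/3)*c₂^4) := by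
    refine (hDY.mul hDI).congr ?_ ?_ ?_ ?_ ?_ <;> (field_simp; try ring)
  have hS : J (fun e => deriv f (α + e) + deriv f (α + (e - (2/3) * (f (α + e) * (deriv f (α + e))⁻¹)))) ((2)*(deriv f α)) ((8/3)*c₂*(deriv f α)) ((10/3)*c₃*(deriv f α) + (4/3)*c₂^2*(deriv f α)) ((112/27)*c₄*(deriv f α) + (4)*c₂*c₃*(deriv f α) + (-8/3)*c₂^3*(deriv f α)) ((82/81)*(iteratedDeriv 4 (deriv f) α / 24) + (8/3)*c₃^2*(deriv f α) + (44/9)*c₂*c₄*(deriv f α) + (-32/3)*c₂^2*c₃*(deriv f α) + (16/3)*c₂^4*(deriv f α)) := by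
    refine (hDe.add hDY).congr ?_ ?_ ?_ ?_ ?_ <;> (field_simp; try ring)
  have h2a : (2 * deriv f α : ℝ) ≠ 0 := by positivity
  have hSI : J (fun e => (deriv f (α + e) + deriv f (α + (e - (2/3) * (f (α + e) * (deriv f (α + e))⁻¹))))⁻¹) ((1/2)/(deriv f α)) ((-2/3)*c₂/(deriv f α)) ((-5/6)*c₃/(deriv f α) + (5/9)*c₂^2/(deriv f α)) ((-28/27)*c₄/(deriv f α) + (11/9)*c₂*c₃/(deriv f α) + (10/27)*c₂^3/(deriv f α)) ((-41/162)*(iteratedDeriv 4 (deriv f) α / 24)/(deriv f α)^2 + (13/18)*c₃^2/(deriv f α) + (125/81)*c₂*c₄/(deriv f α) + (2)*c₂^2*c₃/(deriv f α) + (-250/81)*c₂^4/(deriv f α)) := by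
    refine J.inv hS ?_ ?_ ?_ ?_ ?_ ?_
    · exact h2a
    all_goals (field_simp; try ring)
  have hQ : J (fun e => 2 * f (α + e) * (deriv f (α + e) + deriv f (α + (e - (2/3) * (f (α + e) * (deriv f (α + e))⁻¹))))⁻¹) 0 ((1)) ((-1/3)*c₂) ((-2/3)*c₃ + (-2/9)*c₂^2) ((-29/27)*c₄ + (-5/9)*c₂*c₃ + (50/27)*c₂^3) := by
    refine ((J.smul 2 hFe).mul hSI).congr ?_ ?_ ?_ ?_ ?_ <;> (field_simp; try ring)
  have hGF : J (fun e => 2 - (7/4) * (deriv f (α + (e - (2/3) * (f (α + e) * (deriv f (α + e))⁻¹))) * (deriv f (α + e))⁻¹) + (3/4) * ((deriv f (α + (e - (2/3) * (f (α + e) * (deriv f (α + e))⁻¹))) * (deriv f (α + e))⁻¹) * (deriv f (α + (e - (2/3) * (f (α + e) * (deriv f (α + e))⁻¹))) * (deriv f (α + e))⁻¹))) ((1)) ((1/3)*c₂) ((2/3)*c₃ + (1/3)*c₂^2) ((26/27)*c₄ + (2)*c₂*c₃ + (-16/3)*c₂^3) ((20/81)*(iteratedDeriv 4 (deriv f) α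 / 24)/(deriv f α) + (8/3)*c₃^2 + (29/9)*c₂*c₄ + (-91/3)*c₂^2*c₃ + (80/3)*c₂^4) := by
    refine (((J.const 2).sub (J.smul (7/4) hT)).add (J.smul (3/4) (hT.mul hT))).congr ?_ ?_ ?_ ?_ ?_ <;> (field_simp; try ring)
  have hG : J (fun e => e - (2 - (7/4) * (deriv f (α + (e - (2/3) * (f (α + e) * (deriv f (α + e))⁻¹))) * (deriv f (α + e))⁻¹) + (3/4) * ((deriv f (α + (e - (2/3) * (f (α + e) * (deriv f (α + e))⁻¹))) * (deriv f (α + e))⁻¹) * (deriv f (α + (e - (2/3) * (f (α + e) * (deriv f (α + e))⁻¹))) * (deriv f (α + e))⁻¹))) * (2 * f (α + e) * (deriv f (α + e) + deriv f (α + (e - (2/3) * (f (α + e) * (deriv f (α + e))⁻¹))))⁻¹)) 0 0 0 0 ((1/9) * (-9*c₂*c₃ + c₄ + 33*c₂^3)) := by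
    refine (J.id.sub (hGF.mul hQ)).congr ?_ ?_ ?_ ?_ ?_ <;> (field_simp; try ring)
  have htend : Tendsto (fun x : ℝ => x - α) (nhds α) (nhds 0) := by
    have : Continuous (fun x : ℝ => x - α) := by fun_prop
    simpa using this.tendsto α
  unfold J at hG
  have hfin := hG.comp_tendsto htend
  refine hfin.congr (fun x => ?_) (fun _ => rfl)
  simp only [Function.comp]
  have hax : α + (x - α) = x := by ring
  rw [hax]
  have hax2 : α + (x - α - 2/3 * (f x * (deriv f x)⁻¹)) = x - 2/3 * (f x * (deriv f x)⁻¹) := by ring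
  rw [hax2]
  rw [hF x, ht x, hy x]
  simp only [div_eq_mul_inv]
  ring
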